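/- Let l ≥ 2 be an integer. Then: (i) for every z ∈ ℍ there exists j ∈ ℤ with z ∈ α_l^j • F_l; (ii) for every nonzero j ∈ ℤ, (α_l^j • F_l°) ∩ F_l° = ∅. (Thus F_l is a fundamental domain in ℍ for the cyclic subgroup generated by α_l.) -/

import Mathlib

/-- The Möbius transformation of a `2 × 2` integer matrix acting on complex numbers:
`A • z = (A₀₀·z + A₀₁)/(A₁₀·z + A₁₁)`. -/
noncomputable def moeb (A : Matrix (Fin 2) (Fin 2) ℤ) (z : ℂ) : ℂ :=
  ((A 0 0 : ℂ) * z + (A 0 1 : ℂ)) / ((A 1 0 : ℂ) * z + (A 1 1 : ℂ))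

namespace Stmt5

abbrev SL2 := Matrix.SpecialLinearGroup (Fin 2) ℤ

lemma det2 (A : SL2) : A.1 0 0 * A.1 1 1 - A.1 0 1 * A.1 1 0 = 1 := by
  have h := Matrix.SpecialLinearGroup.det_coe A
  rwa [Matrix.det_fin_two] at h

lemma denom_ne (A : SL2) (z : ℂ) (hz : 0 < z.im) :
    ((A.1 1 0 : ℤ) : ℂ) * z + ((A.1 1 1 : ℤ) : ℂ) ≠ 0 := by
  intro h
  rcases eq_or_ne (A.1 1 0) 0 with h0 | h0
  · have h1 : A.1 1 1 ≠ 0 := by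
      intro h1
      have := det2 A
      rw [h0, h1] at this
      simp at this
    rw [h0] at h
    simp at h
    exact h1 (by exact_mod_cast h)
  · have him : ((A.1 1 0 : ℤ) : ℂ).im * z.re + ((A.1 1 0 : ℤ):ℂ).re * z.im + ((A.1 1 1 : ℤ):ℂ).im = 0 := by
      have := congrArg Complex.im h
      simpa [Complex.add_im, Complex.mul_im] using this
    simp [Complex.intCast_im, Complex.intCast_re] at him
    rcases him with him | him
    · exact h0 (by exact_mod_cast him)
    · linarith

lemma moeb_im (A : SL2) (z : ℂ) :
    (moeb A.1 z).im = z.im / Complex.normSq (((A.1 1 0 : ℤ):ℂ) * z + ((A.1 1 1 : ℤ):ℂ)) := by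
  have hdet := det2 A
  have hdetR : (A.1 0 0 : ℝ) * (A.1 1 1 : ℝ) - (A.1 0 1 : ℝ) * (A.1 1 0 : ℝ) = 1 := by
    exact_mod_cast congrArg (fun n : ℤ => (n : ℝ)) hdet
  unfold moeb
  rw [Complex.div_im, div_sub_div_same]
  congr 1
  simp [Complex.add_im, Complex.add_re, Complex.mul_im, Complex.mul_re]
  linear_combination z.im * hdetR

lemma moeb_im_pos (A : SL2) (z : ℂ) (hz : 0 < z.im) : 0 < (moeb A.1 z).im := by
  rw [moeb_im]
  exact div_pos hz (Complex.normSq_pos.2 (denom_ne A z hz))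

lemma moeb_one' (z : ℂ) : moeb (1 : Matrix (Fin 2) (Fin 2) ℤ) z = z := by
  simp [moeb, Matrix.one_apply]

lemma moeb_one (z : ℂ) : moeb ((1 : SL2) : Matrix (Fin 2) (Fin 2) ℤ) z = z := by
  rw [Matrix.SpecialLinearGroup.coe_one, moeb_one']

lemma moeb_mul (A B : SL2) (z : ℂ) (hz : 0 < z.im) :
    moeb ((A * B : SL2) : Matrix (Fin 2) (Fin 2) ℤ) z = moeb A.1 (moeb B.1 z) := by
  have hdB := denom_ne B z hz
  have hdAB := denom_ne (A * B) z hz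
  have hzB : 0 < (moeb B.1 z).im := moeb_im_pos B z hz
  have hdA : ((A.1 1 0 : ℤ):ℂ) * (moeb B.1 z) + ((A.1 1 1 : ℤ):ℂ) ≠ 0 := denom_ne A _ hzB
  have hAB : ∀ i j, ((A * B : SL2) : Matrix (Fin 2) (Fin 2) ℤ) i j
      = A.1 i 0 * B.1 0 j + A.1 i 1 * B.1 1 j := by
    intro i j
    rw [Matrix.SpecialLinearGroup.coe_mul, Matrix.mul_apply, Fin.sum_univ_two]
  conv_lhs => rw [moeb]
  rw [moeb]
  rw [div_eq_div_iff (by simpa only [hAB] using hdAB) hdA]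
  simp only [hAB]
  rw [moeb]
  push_cast
  field_simp
  ring


lemma moeb_zpow (α : SL2) (φ : ℂ → ℝ)
    (hstep : ∀ z : ℂ, 0 < z.im → φ (moeb α.1 z) = φ z - 1) :
    ∀ j : ℤ, ∀ z : ℂ, 0 < z.im →
      0 < (moeb ((α ^ j : SL2) : Matrix (Fin 2) (Fin 2) ℤ) z).im ∧
      φ (moeb ((α ^ j : SL2) : Matrix (Fin 2) (Fin 2) ℤ) z) = φ z - j := by
  intro j
  induction j using Int.induction_on with
  | zero => intro z hz; rw [zpow_zero, Matrix.SpecialLinearGroup.coe_one, moeb_one']; simp [hz]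
  | succ k ih =>
    intro z hz
    have hz' : 0 < (moeb α.1 z).im := moeb_im_pos α z hz
    have h1 : (α : SL2) ^ ((k : ℤ) + 1) = α ^ (k : ℤ) * α := zpow_add_one α k
    rw [h1, moeb_mul _ _ z hz]
    obtain ⟨hA, hB⟩ := ih (moeb α.1 z) hz'
    refine ⟨hA, ?_⟩
    rw [hB, hstep z hz]
    push_cast
    ring
  | pred k ih =>
    intro z hz
    have hz' : 0 < (moeb (α⁻¹).1 z).im := moeb_im_pos α⁻¹ z hz
    have h1 : (α : SL2) ^ (-(k : ℤ) - 1) = α ^ (-(k : ℤ)) * α⁻¹ := zpow_sub_one α _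
    rw [h1, moeb_mul _ _ z hz]
    obtain ⟨hA, hB⟩ := ih (moeb (α⁻¹).1 z) hz'
    refine ⟨hA, ?_⟩
    have hinv : φ (moeb (α⁻¹).1 z) = φ z + 1 := by
      have h2 : moeb α.1 (moeb (α⁻¹).1 z) = z := by
        rw [← moeb_mul α α⁻¹ z hz, mul_inv_cancel, moeb_one]
      have := hstep (moeb (α⁻¹).1 z) hz'
      rw [h2] at this
      linarith
    rw [hB, hinv]
    push_cast
    ring

lemma core (l : ℤ) (α : SL2)
    (Fl Flo : Set ℂ)
    (hFl : Fl = {z : ℂ | 0 < z.im ∧ z.re ≤ (l : ℝ) / 2 * ‖z‖ ^ 2 ∧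
      z.re ≤ (l : ℝ) / 2})
    (hFlo : Flo = {z : ℂ | 0 < z.im ∧ z.re < (l : ℝ) / 2 * ‖z‖ ^ 2 ∧
      z.re < (l : ℝ) / 2})
    (φ : ℂ → ℝ)
    (hstep : ∀ z : ℂ, 0 < z.im → φ (moeb α.1 z) = φ z - 1)
    (h1 : ∀ z : ℂ, 0 < z.im → (z.re ≤ (l : ℝ) / 2 ↔ 0 ≤ φ z))
    (h2 : ∀ z : ℂ, 0 < z.im → (z.re < (l : ℝ) / 2 ↔ 0 < φ z))
    (h3 : ∀ z : ℂ, 0 < z.im → (z.re ≤ (l : ℝ) / 2 * ‖z‖ ^ 2 ↔ φ z ≤ 1))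
    (h4 : ∀ z : ℂ, 0 < z.im → (z.re < (l : ℝ) / 2 * ‖z‖ ^ 2 ↔ φ z < 1)) :
    (∀ z : ℂ, 0 < z.im → ∃ j : ℤ, ∃ w ∈ Fl,
      z = moeb ((α ^ j : SL2) : Matrix (Fin 2) (Fin 2) ℤ) w) ∧
    (∀ j : ℤ, j ≠ 0 → ∀ w ∈ Flo,
      moeb ((α ^ j : SL2) : Matrix (Fin 2) (Fin 2) ℤ) w ∉ Flo) := by
  have key := moeb_zpow α φ hstep
  constructor
  · intro z hz
    set k : ℤ := ⌊φ z⌋ with hk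
    obtain ⟨hwim, hwφ⟩ := key k z hz
    set w := moeb ((α ^ k : SL2) : Matrix (Fin 2) (Fin 2) ℤ) z with hw
    have hφw0 : 0 ≤ φ w := by
      rw [hwφ]; have := Int.floor_le (φ z); linarith
    have hφw1 : φ w ≤ 1 := by
      rw [hwφ]; have := Int.lt_floor_add_one (φ z); linarith
    refine ⟨-k, w, ?_, ?_⟩
    · rw [hFl]
      exact ⟨hwim, (h3 w hwim).2 hφw1, (h1 w hwim).2 hφw0⟩
    · have : moeb ((α ^ (-k) * α ^ k : SL2) : Matrix (Fin 2) (Fin 2) ℤ) z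
          = moeb ((α ^ (-k) : SL2) : Matrix (Fin 2) (Fin 2) ℤ) w := moeb_mul _ _ z hz
      rw [← zpow_add, neg_add_cancel, zpow_zero, moeb_one] at this
      exact this
  · intro j hj w hw hwj
    rw [hFlo] at hw hwj
    obtain ⟨hwim, hw3, hw1⟩ := hw
    obtain ⟨hjim, hj3, hj1⟩ := hwj
    obtain ⟨_, hφj⟩ := key j w hwim
    have hw0 : 0 < φ w := (h2 w hwim).1 hw1
    have hw01 : φ w < 1 := (h4 w hwim).1 hw3
    have hj0 : 0 < φ w - j := by rw [← hφj]; exact (h2 _ hjim).1 hj1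
    have hj01 : φ w - j < 1 := by rw [← hφj]; exact (h4 _ hjim).1 hj3
    have hj1' : (j : ℝ) < 1 := by linarith
    have hj2' : (-1 : ℝ) < j := by linarith
    have : j < 1 := by exact_mod_cast hj1'
    have : (-1 : ℤ) < j := by exact_mod_cast hj2'
    omega


lemma moeb_alpha (l : ℤ) (α : SL2) (hα : (α : Matrix (Fin 2) (Fin 2) ℤ) = !![l, -1; 1, 0])
    (z : ℂ) : moeb α.1 z = ((l : ℂ) * z - 1) / z := by
  rw [moeb, hα]
  norm_num
  ring_nf

end Stmt5

open Stmt5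

/-- Let `l ≥ 2` be an integer and `α_l = [[l, −1], [1, 0]] ∈ SL(2,ℤ)`.  Let
`F_l = {z ∈ ℍ : Re z ≤ (l/2)·|z|² and Re z ≤ l/2}` and
`F_l° = {z ∈ ℍ : Re z < (l/2)·|z|² and Re z < l/2}`.  Then:
(i) every `z ∈ ℍ` lies in `α_l^j • F_l` for some `j : ℤ`;
(ii) for every nonzero `j : ℤ`, `(α_l^j • F_l°) ∩ F_l° = ∅`.
Thus `F_l` is a fundamental domain in `ℍ` for the cyclic subgroup `⟨α_l⟩`. -/
theorem stmt_5 (l : ℤ) (hl : 2 ≤ l)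
    (α : Matrix.SpecialLinearGroup (Fin 2) ℤ)
    (hα : (α : Matrix (Fin 2) (Fin 2) ℤ) = !![l, -1; 1, 0])
    (Fl Flo : Set ℂ)
    (hFl : Fl = {z : ℂ | 0 < z.im ∧ z.re ≤ (l : ℝ) / 2 * ‖z‖ ^ 2 ∧
      z.re ≤ (l : ℝ) / 2})
    (hFlo : Flo = {z : ℂ | 0 < z.im ∧ z.re < (l : ℝ) / 2 * ‖z‖ ^ 2 ∧
      z.re < (l : ℝ) / 2}) :
    (∀ z : ℂ, 0 < z.im → ∃ j : ℤ, ∃ w ∈ Fl,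
      z = moeb ((α ^ j : Matrix.SpecialLinearGroup (Fin 2) ℤ) : Matrix (Fin 2) (Fin 2) ℤ) w) ∧
    (∀ j : ℤ, j ≠ 0 → ∀ w ∈ Flo,
      moeb ((α ^ j : Matrix.SpecialLinearGroup (Fin 2) ℤ) : Matrix (Fin 2) (Fin 2) ℤ) w ∉ Flo) := by
  rcases eq_or_lt_of_le hl with hl2 | hl3
  · -- case l = 2
    subst hFl hFlo
    have hl2' : l = 2 := hl2.symm
    subst hl2'
    refine core 2 α _ _ rfl rfl (fun z => (1 - z.re) / Complex.normSq (z - 1)) ?_ ?_ ?_ ?_ ?_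
    · -- step
      intro z hz
      beta_reduce
      have hz0 : z ≠ 0 := fun h => by simp [h] at hz
      have hn : 0 < Complex.normSq z := Complex.normSq_pos.2 hz0
      have hz1 : z - 1 ≠ 0 := by
        intro h
        have := congrArg Complex.im h
        simp [Complex.sub_im] at this
        simp [this] at hz
      have hN1 : 0 < Complex.normSq (z - 1) := Complex.normSq_pos.2 hz1
      have hm : moeb α.1 z = 2 - 1 / z := by
        rw [moeb_alpha 2 α hα]
        push_cast
        field_simp
      have hsub : moeb α.1 z - 1 = (z - 1) / z := by
        rw [hm]; field_simp; ring
      have hre : (moeb α.1 z).re = 2 - z.re / Complex.normSq z := by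
        rw [hm]
        simp [Complex.sub_re, Complex.div_re]
      have hrel : Complex.normSq (z - 1) = Complex.normSq z - 2 * z.re + 1 := by
        simp [Complex.normSq_apply, Complex.sub_re, Complex.sub_im]
        ring
      rw [hsub, Complex.normSq_div, hre]
      rw [hrel] at hN1 ⊢
      field_simp
      ring
    · intro z hz
      beta_reduce
      have hz1 : z - 1 ≠ 0 := by
        intro h
        have := congrArg Complex.im h
        simp [Complex.sub_im] at this
        simp [this] at hz
      have hN1 : 0 < Complex.normSq (z - 1) := Complex.normSq_pos.2 hz1
      rw [le_div_iff₀ hN1, zero_mul]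
      constructor <;> intro <;> push_cast at * <;> linarith
    · intro z hz
      beta_reduce
      have hz1 : z - 1 ≠ 0 := by
        intro h
        have := congrArg Complex.im h
        simp [Complex.sub_im] at this
        simp [this] at hz
      have hN1 : 0 < Complex.normSq (z - 1) := Complex.normSq_pos.2 hz1
      rw [lt_div_iff₀ hN1, zero_mul]
      constructor <;> intro <;> push_cast at * <;> linarith
    · intro z hz
      beta_reduce
      have hz1 : z - 1 ≠ 0 := by
        intro h
        have := congrArg Complex.im h
        simp [Complex.sub_im] at this
        simp [this] at hz
      have hN1 : 0 < Complex.normSq (z - 1) := Complex.normSq_pos.2 hz1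
      have hrel : Complex.normSq (z - 1) = Complex.normSq z - 2 * z.re + 1 := by
        simp [Complex.normSq_apply, Complex.sub_re, Complex.sub_im]
        ring
      rw [div_le_one hN1, Complex.sq_norm, hrel]
      constructor <;> intro <;> push_cast at * <;> linarith
    · intro z hz
      beta_reduce
      have hz1 : z - 1 ≠ 0 := by
        intro h
        have := congrArg Complex.im h
        simp [Complex.sub_im] at this
        simp [this] at hz
      have hN1 : 0 < Complex.normSq (z - 1) := Complex.normSq_pos.2 hz1
      have hrel : Complex.normSq (z - 1) = Complex.normSq z - 2 * z.re + 1 := by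
        simp [Complex.normSq_apply, Complex.sub_re, Complex.sub_im]
        ring
      rw [div_lt_one hN1, Complex.sq_norm, hrel]
      constructor <;> intro <;> push_cast at * <;> linarith
  · -- case 2 < l
    subst hFl hFlo
    have hl3 : (3 : ℤ) ≤ l := hl3
    have hl3R : (3 : ℝ) ≤ (l : ℝ) := by exact_mod_cast hl3
    obtain ⟨d, hd_def⟩ : ∃ d : ℝ, d = Real.sqrt ((l : ℝ) ^ 2 - 4) := ⟨_, rfl⟩
    have hd2 : d ^ 2 = (l : ℝ) ^ 2 - 4 := by rw [hd_def]; exact Real.sq_sqrt (by nlinarith)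
    have hd0 : 0 < d := by rw [hd_def]; exact Real.sqrt_pos.2 (by nlinarith)
    obtain ⟨a, ha_def⟩ : ∃ a : ℝ, a = ((l : ℝ) + d) / 2 := ⟨_, rfl⟩
    obtain ⟨b, hb_def⟩ : ∃ b : ℝ, b = ((l : ℝ) - d) / 2 := ⟨_, rfl⟩
    have hdl : d < (l : ℝ) := by nlinarith
    have hb0 : 0 < b := by rw [hb_def]; linarith
    have ha1 : 1 < a := by rw [ha_def]; linarith
    have ha0 : 0 < a := by linarith
    have hab : a * b = 1 := by rw [ha_def, hb_def]; linear_combination (-(1:ℝ)/4) * hd2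
    have hlab : a + b = (l : ℝ) := by rw [ha_def, hb_def]; ring
    have had : a - b = d := by rw [ha_def, hb_def]; ring
    have ha4 : 1 < a ^ 4 := by nlinarith [sq_nonneg (a - 1), sq_nonneg (a + 1), ha1]
    have hL : 0 < Real.log (a ^ 4) := Real.log_pos ha4
    have hsubne : ∀ (r : ℝ) (z : ℂ), 0 < z.im → z - (r : ℂ) ≠ 0 := by
      intro r z hz h
      have := congrArg Complex.im h
      simp [Complex.sub_im] at this
      simp [this] at hz
    have hNexp : ∀ (r : ℝ) (z : ℂ), Complex.normSq (z - (r : ℂ)) = (z.re - r) ^ 2 + z.im ^ 2 := by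
      intro r z
      simp [Complex.normSq_apply, Complex.sub_re, Complex.sub_im]
      ring
    refine core l α _ _ rfl rfl
      (fun z => Real.log (Complex.normSq (z - (a : ℂ)) / Complex.normSq (z - (b : ℂ))) /
        Real.log (a ^ 4)) ?_ ?_ ?_ ?_ ?_
    · -- step
      intro z hz
      beta_reduce
      have hz0 : z ≠ 0 := fun h => by simp [h] at hz
      have hn : 0 < Complex.normSq z := Complex.normSq_pos.2 hz0
      have hNa : 0 < Complex.normSq (z - (a : ℂ)) := Complex.normSq_pos.2 (hsubne a z hz)
      have hNb : 0 < Complex.normSq (z - (b : ℂ)) := Complex.normSq_pos.2 (hsubne b z hz)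
      have hS : 0 < Complex.normSq (z - (a : ℂ)) / Complex.normSq (z - (b : ℂ)) :=
        div_pos hNa hNb
      have hlabC : (a : ℂ) + (b : ℂ) = ((l : ℤ) : ℂ) := by
        exact_mod_cast hlab
      have habC : (a : ℂ) * (b : ℂ) = 1 := by exact_mod_cast congrArg (fun r : ℝ => (r : ℂ)) hab
      have hma : moeb α.1 z - (a : ℂ) = (b : ℂ) * (z - (a : ℂ)) / z := by
        rw [moeb_alpha l α hα]
        field_simp
        linear_combination habC - z * hlabC
      have hmb : moeb α.1 z - (b : ℂ) = (a : ℂ) * (z - (b : ℂ)) / z := by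
        rw [moeb_alpha l α hα]
        field_simp
        linear_combination habC - z * hlabC
      have hratio : Complex.normSq (moeb α.1 z - (a : ℂ)) / Complex.normSq (moeb α.1 z - (b : ℂ))
          = (Complex.normSq (z - (a : ℂ)) / Complex.normSq (z - (b : ℂ))) / a ^ 4 := by
        rw [hma, hmb, Complex.normSq_div, Complex.normSq_div, Complex.normSq_mul,
          Complex.normSq_mul, Complex.normSq_ofReal, Complex.normSq_ofReal]
        field_simp
        linear_combination (a * b + 1) * hab
      rw [hratio, Real.log_div (ne_of_gt hS) (by positivity), sub_div, div_self (ne_of_gt hL)]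
    · -- mem1
      intro z hz
      beta_reduce
      have hNa : 0 < Complex.normSq (z - (a : ℂ)) := Complex.normSq_pos.2 (hsubne a z hz)
      have hNb : 0 < Complex.normSq (z - (b : ℂ)) := Complex.normSq_pos.2 (hsubne b z hz)
      have hS : 0 < Complex.normSq (z - (a : ℂ)) / Complex.normSq (z - (b : ℂ)) :=
        div_pos hNa hNb
      have hkey : Complex.normSq (z - (a : ℂ)) - Complex.normSq (z - (b : ℂ))
          = d * ((l : ℝ) - 2 * z.re) := by
        rw [hNexp, hNexp]
        linear_combination (-(2 * z.re - (l : ℝ))) * had + (a - b) * hlab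
      rw [le_div_iff₀ hL, zero_mul, Real.log_nonneg_iff hS, one_le_div hNb]
      constructor
      · intro h
        have := mul_nonneg hd0.le (by linarith : (0:ℝ) ≤ (l : ℝ) - 2 * z.re)
        linarith
      · intro h
        by_contra hc
        push_neg at hc
        have := mul_neg_of_pos_of_neg hd0 (by linarith : (l : ℝ) - 2 * z.re < 0)
        linarith
    · -- mem2
      intro z hz
      beta_reduce
      have hNa : 0 < Complex.normSq (z - (a : ℂ)) := Complex.normSq_pos.2 (hsubne a z hz)
      have hNb : 0 < Complex.normSq (z - (b : ℂ)) := Complex.normSq_pos.2 (hsubne b z hz)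
      have hS : 0 < Complex.normSq (z - (a : ℂ)) / Complex.normSq (z - (b : ℂ)) :=
        div_pos hNa hNb
      have hkey : Complex.normSq (z - (a : ℂ)) - Complex.normSq (z - (b : ℂ))
          = d * ((l : ℝ) - 2 * z.re) := by
        rw [hNexp, hNexp]
        linear_combination (-(2 * z.re - (l : ℝ))) * had + (a - b) * hlab
      rw [lt_div_iff₀ hL, zero_mul, Real.log_pos_iff hS.le, one_lt_div hNb]
      constructor
      · intro h
        have := mul_pos hd0 (by linarith : (0:ℝ) < (l : ℝ) - 2 * z.re)
        linarith
      · intro h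
        by_contra hc
        push_neg at hc
        have := mul_nonpos_of_nonneg_of_nonpos hd0.le (by linarith : (l : ℝ) - 2 * z.re ≤ 0)
        linarith
    · -- mem3
      intro z hz
      beta_reduce
      have hNa : 0 < Complex.normSq (z - (a : ℂ)) := Complex.normSq_pos.2 (hsubne a z hz)
      have hNb : 0 < Complex.normSq (z - (b : ℂ)) := Complex.normSq_pos.2 (hsubne b z hz)
      have hS : 0 < Complex.normSq (z - (a : ℂ)) / Complex.normSq (z - (b : ℂ)) :=
        div_pos hNa hNb
      have hn : Complex.normSq z = z.re ^ 2 + z.im ^ 2 := by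
        simp [Complex.normSq_apply]; ring
      have hkey : a ^ 4 * Complex.normSq (z - (b : ℂ)) - Complex.normSq (z - (a : ℂ))
          = a * (a ^ 2 - 1) * ((l : ℝ) * Complex.normSq z - 2 * z.re) := by
        rw [hNexp, hNexp, hn]
        linear_combination ((z.re ^ 2 + z.im ^ 2) * (1 - a ^ 2) - 2 * a ^ 3 * z.re +
          a ^ 2 * (a * b + 1)) * hab + (a * (a ^ 2 - 1) * (z.re ^ 2 + z.im ^ 2)) * hlab
      have hap : 0 < a * (a ^ 2 - 1) := by nlinarith
      rw [div_le_one hL, Complex.sq_norm,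
        Real.log_le_log_iff hS (by positivity), div_le_iff₀ hNb]
      constructor
      · intro h
        have := mul_nonneg hap.le
          (by linarith : (0:ℝ) ≤ (l : ℝ) * Complex.normSq z - 2 * z.re)
        linarith
      · intro h
        by_contra hc
        push_neg at hc
        have := mul_neg_of_pos_of_neg hap
          (by linarith : (l : ℝ) * Complex.normSq z - 2 * z.re < 0)
        linarith
    · -- mem4
      intro z hz
      beta_reduce
      have hNa : 0 < Complex.normSq (z - (a : ℂ)) := Complex.normSq_pos.2 (hsubne a z hz)
      have hNb : 0 < Complex.normSq (z - (b : ℂ)) := Complex.normSq_pos.2 (hsubne b z hz)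
      have hS : 0 < Complex.normSq (z - (a : ℂ)) / Complex.normSq (z - (b : ℂ)) :=
        div_pos hNa hNb
      have hn : Complex.normSq z = z.re ^ 2 + z.im ^ 2 := by
        simp [Complex.normSq_apply]; ring
      have hkey : a ^ 4 * Complex.normSq (z - (b : ℂ)) - Complex.normSq (z - (a : ℂ))
          = a * (a ^ 2 - 1) * ((l : ℝ) * Complex.normSq z - 2 * z.re) := by
        rw [hNexp, hNexp, hn]
        linear_combination ((z.re ^ 2 + z.im ^ 2) * (1 - a ^ 2) - 2 * a ^ 3 * z.re +
          a ^ 2 * (a * b + 1)) * hab + (a * (a ^ 2 - 1) * (z.re ^ 2 + z.im ^ 2)) * hlab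
      have hap : 0 < a * (a ^ 2 - 1) := by nlinarith
      rw [div_lt_one hL, Complex.sq_norm,
        Real.log_lt_log_iff hS (by positivity), div_lt_iff₀ hNb]
      constructor
      · intro h
        have := mul_pos hap
          (by linarith : (0:ℝ) < (l : ℝ) * Complex.normSq z - 2 * z.re)
        linarith
      · intro h
        by_contra hc
        push_neg at hc
        have := mul_nonpos_of_nonneg_of_nonpos hap.le
          (by linarith : (l : ℝ) * Complex.normSq z - 2 * z.re ≤ 0)
        linarith
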